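/- An element x ∈ Aut(T) lies in U if and only if (x, x⁻¹) ∈ G, where G = ⟨⟨a₁,a₃⟩⟩ and U is the normal closure of ⟨⟨a₂a₃⁻¹⟩⟩ in G. -/

import Mathlib

open Equiv

/-- Vertices of the infinite rooted binary tree: finite words over `Bool`.
The parent of a nonempty word is `dropLast`. -/
abbrev Wd := List Bool

/-- The group `Ω = Aut(T)` of automorphisms of the infinite rooted binary tree,
realized as the subgroup of permutations of the vertex set preserving length
(levels) and the parent relation. -/
def OmegaSG : Subgroup (Equiv.Perm Wd) where
  carrier := {σ | (∀ w, (σ w).length = w.length) ∧ ∀ w, (σ w).dropLast = σ w.dropLast}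
  one_mem' := ⟨fun _ => rfl, fun _ => rfl⟩
  mul_mem' := by
    rintro σ τ ⟨hσl, hσd⟩ ⟨hτl, hτd⟩
    refine ⟨fun w => ?_, fun w => ?_⟩
    · simp [Equiv.Perm.mul_apply, hσl, hτl]
    · simp [Equiv.Perm.mul_apply, hσd, hτd]
  inv_mem' := by
    rintro σ ⟨hl, hd⟩
    refine ⟨fun w => ?_, fun w => ?_⟩
    · have := hl (σ⁻¹ w)
      rw [show σ (σ⁻¹ w) = w from (Equiv.eq_symm_apply σ).mp rfl] at this
      exact this.symm
    · apply σ.injective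
      have := hd (σ⁻¹ w)
      rw [show σ (σ⁻¹ w) = w from (Equiv.eq_symm_apply σ).mp rfl] at this
      rw [← this]
      simp

/-- The section pairing: `(u,v)` acts as `u` on the subtree rooted at `false`
and as `v` on the subtree rooted at `true`. -/
def pairFun (f g : Wd → Wd) : Wd → Wd
  | [] => []
  | false :: w => false :: f w
  | true :: w => true :: g w

@[simp] lemma pairFun_nil (f g : Wd → Wd) : pairFun f g [] = [] := rfl
@[simp] lemma pairFun_false (f g : Wd → Wd) (w : Wd) :
    pairFun f g (false :: w) = false :: f w := rfl
@[simp] lemma pairFun_true (f g : Wd → Wd) (w : Wd) :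
    pairFun f g (true :: w) = true :: g w := rfl

lemma pairFun_comp (f g f' g' : Wd → Wd) (hf : ∀ w, f (f' w) = w) (hg : ∀ w, g (g' w) = w) :
    ∀ w, pairFun f g (pairFun f' g' w) = w := by
  rintro (_ | ⟨(_|_), w⟩) <;> simp [hf, hg]

/-- The permutation `(u,v)` of the tree. -/
def pairPerm (u v : Equiv.Perm Wd) : Equiv.Perm Wd where
  toFun := pairFun u v
  invFun := pairFun u.symm v.symm
  left_inv := pairFun_comp _ _ _ _ (fun w => u.symm_apply_apply w) (fun w => v.symm_apply_apply w)
  right_inv := pairFun_comp _ _ _ _ (fun w => u.apply_symm_apply w) (fun w => v.apply_symm_apply w)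

@[simp] lemma pairPerm_apply (u v : Equiv.Perm Wd) (w : Wd) :
    pairPerm u v w = pairFun u v w := rfl

/-- The first-level swap `σ`. -/
def swapPerm : Equiv.Perm Wd where
  toFun w := match w with | [] => [] | b :: w => (!b) :: w
  invFun w := match w with | [] => [] | b :: w => (!b) :: w
  left_inv := by rintro (_ | ⟨b, w⟩) <;> simp
  right_inv := by rintro (_ | ⟨b, w⟩) <;> simp

@[simp] lemma swapPerm_nil : swapPerm [] = [] := rfl
@[simp] lemma swapPerm_cons (b : Bool) (w : Wd) : swapPerm (b :: w) = (!b) :: w := rfl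

lemma swapPerm_mem : swapPerm ∈ OmegaSG := by
  constructor
  · rintro (_ | ⟨b, w⟩) <;> simp
  · rintro (_ | ⟨b, w⟩)
    · simp
    · rcases eq_or_ne w [] with rfl | hw
      · simp
      · simp only [swapPerm_cons, List.dropLast_cons_of_ne_nil hw]

lemma mem_omega_length {u : Equiv.Perm Wd} (hu : u ∈ OmegaSG) (w : Wd) :
    (u w).length = w.length := hu.1 w

lemma mem_omega_ne_nil {u : Equiv.Perm Wd} (hu : u ∈ OmegaSG) {w : Wd} (hw : w ≠ []) :
    u w ≠ [] := by
  intro h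
  exact hw (List.eq_nil_of_length_eq_zero (by rw [← hu.1 w, h]; rfl))

lemma mem_omega_nil {u : Equiv.Perm Wd} (hu : u ∈ OmegaSG) : u [] = [] :=
  List.eq_nil_of_length_eq_zero (hu.1 [])

lemma pairPerm_mem {u v : Equiv.Perm Wd} (hu : u ∈ OmegaSG) (hv : v ∈ OmegaSG) :
    pairPerm u v ∈ OmegaSG := by
  constructor
  · rintro (_ | ⟨(_|_), w⟩) <;> simp [hu.1, hv.1]
  · rintro (_ | ⟨(_|_), w⟩)
    · simp
    · rcases eq_or_ne w [] with rfl | hw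
      · simp [mem_omega_nil hu]
      · simp only [pairPerm_apply, pairFun_false, List.dropLast_cons_of_ne_nil hw,
          List.dropLast_cons_of_ne_nil (mem_omega_ne_nil hu hw)]
        rw [hu.2]
    · rcases eq_or_ne w [] with rfl | hw
      · simp [mem_omega_nil hv]
      · simp only [pairPerm_apply, pairFun_true, List.dropLast_cons_of_ne_nil hw,
          List.dropLast_cons_of_ne_nil (mem_omega_ne_nil hv hw)]
        rw [hv.2]

/-- `(u,v)` as an element of `Ω`. -/
def pairOm (u v : OmegaSG) : OmegaSG := ⟨pairPerm u.1 v.1, pairPerm_mem u.2 v.2⟩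

/-- `σ` as an element of `Ω`. -/
def swapOm : OmegaSG := ⟨swapPerm, swapPerm_mem⟩

/-! ### Levels, restriction, sign, odometers -/

/-- Level `n` of the tree: words of length `n`. -/
abbrev Lv (n : ℕ) := {w : Wd // w.length = n}

instance fintypeLv (n : ℕ) : Fintype (Lv n) := by
  apply Fintype.ofSurjective (fun g : Fin n → Bool => (⟨List.ofFn g, List.length_ofFn (f := g)⟩ : Lv n))
  rintro ⟨w, rfl⟩
  exact ⟨w.get, Subtype.ext (List.ofFn_get w)⟩

/-- The permutation induced by `g ∈ Ω` on level `n`. -/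
def levelPerm (n : ℕ) (g : OmegaSG) : Equiv.Perm (Lv n) where
  toFun w := ⟨g.1 w.1, by rw [mem_omega_length g.2, w.2]⟩
  invFun w := ⟨(g⁻¹ : OmegaSG).1 w.1, by rw [mem_omega_length (g⁻¹ : OmegaSG).2, w.2]⟩
  left_inv w := Subtype.ext (by simp)
  right_inv w := Subtype.ext (by simp)

/-- Restriction to level `n` as a group homomorphism. -/
def levelHom (n : ℕ) : OmegaSG →* Equiv.Perm (Lv n) where
  toFun := levelPerm n
  map_one' := Equiv.ext fun w => Subtype.ext rfl
  map_mul' g h := Equiv.ext fun w => Subtype.ext rfl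

/-- `sgn_n`: the sign of the permutation induced on level `n`. -/
noncomputable def sgn (n : ℕ) (g : OmegaSG) : ℤˣ := Equiv.Perm.sign (levelPerm n g)

/-- An odometer: an element acting transitively on every level of the tree. -/
def IsOdometer (g : OmegaSG) : Prop :=
  ∀ n : ℕ, ∀ v w : Lv n, ∃ k : ℤ, ((g ^ k : OmegaSG) : Equiv.Perm Wd) v.1 = w.1

/-! ### The profinite topology on `Aut(T)` -/

instance : TopologicalSpace Wd := ⊥
instance : DiscreteTopology Wd := ⟨rfl⟩
instance : TopologicalSpace (Equiv.Perm Wd) :=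
  TopologicalSpace.induced (fun g => (g : Wd → Wd)) Pi.topologicalSpace

lemma continuous_permCoe : Continuous (fun g : Equiv.Perm Wd => (g : Wd → Wd)) :=
  continuous_induced_dom

lemma continuous_permApply (w : Wd) : Continuous fun g : Equiv.Perm Wd => g w :=
  (continuous_apply w).comp continuous_permCoe

instance : IsTopologicalGroup (Equiv.Perm Wd) where
  continuous_mul := by
    apply continuous_induced_rng.2
    apply continuous_pi
    intro w
    rw [continuous_discrete_rng]
    intro y
    have h : (fun p : Equiv.Perm Wd × Equiv.Perm Wd => ((p.1 * p.2 : Equiv.Perm Wd) : Wd → Wd) w) ⁻¹' {y}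
        = ⋃ x : Wd, {p : Equiv.Perm Wd × Equiv.Perm Wd | p.2 w = x} ∩ {p | p.1 x = y} := by
      ext p
      simp only [Set.mem_preimage, Set.mem_singleton_iff, Set.mem_iUnion, Set.mem_inter_iff,
        Set.mem_setOf_eq, Equiv.Perm.mul_apply]
      constructor
      · intro hh; exact ⟨p.2 w, rfl, hh⟩
      · rintro ⟨x, rfl, hh⟩; exact hh
    show IsOpen ((fun p : Equiv.Perm Wd × Equiv.Perm Wd =>
      ((p.1 * p.2 : Equiv.Perm Wd) : Wd → Wd) w) ⁻¹' {y})
    rw [h]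
    refine isOpen_iUnion fun x => IsOpen.inter ?_ ?_
    · exact IsOpen.preimage ((continuous_permApply w).comp continuous_snd) (isOpen_discrete {x})
    · exact IsOpen.preimage ((continuous_permApply x).comp continuous_fst) (isOpen_discrete {y})
  continuous_inv := by
    apply continuous_induced_rng.2
    apply continuous_pi
    intro w
    rw [continuous_discrete_rng]
    intro y
    have h : (fun g : Equiv.Perm Wd => ((g⁻¹ : Equiv.Perm Wd) : Wd → Wd) w) ⁻¹' {y}
        = {g : Equiv.Perm Wd | g y = w} := by
      ext g
      simp only [Set.mem_preimage, Set.mem_singleton_iff, Set.mem_setOf_eq]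
      constructor
      · rintro rfl; simp
      · intro hh; rw [← hh]; simp
    show IsOpen ((fun g : Equiv.Perm Wd => ((g⁻¹ : Equiv.Perm Wd) : Wd → Wd) w) ⁻¹' {y})
    rw [h]
    exact IsOpen.preimage (continuous_permApply y) (isOpen_discrete {w})

/-! ### The recursive generators `a₁ = σ`, `a₂ = (a₃⁻¹, a₂⁻¹)σ`, `a₃ = (a₂, a₃)` -/

mutual
  /-- The underlying function of `a₂`. -/
  def pA : Wd → Wd
    | [] => []
    | false :: w => true :: piA w
    | true :: w => false :: qiA w
  /-- The underlying function of `a₃`. -/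
  def qA : Wd → Wd
    | [] => []
    | false :: w => false :: pA w
    | true :: w => true :: qA w
  /-- The underlying function of `a₂⁻¹`. -/
  def piA : Wd → Wd
    | [] => []
    | false :: w => true :: qA w
    | true :: w => false :: pA w
  /-- The underlying function of `a₃⁻¹`. -/
  def qiA : Wd → Wd
    | [] => []
    | false :: w => false :: piA w
    | true :: w => true :: qiA w
end

lemma a_inv_lemma : ∀ w : Wd, pA (piA w) = w ∧ piA (pA w) = w ∧ qA (qiA w) = w ∧ qiA (qA w) = w := by
  intro w
  induction w with
  | nil => simp [pA, qA, piA, qiA]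
  | cons b w ih =>
    cases b <;>
      simp [pA, qA, piA, qiA, ih.1, ih.2.1, ih.2.2.1, ih.2.2.2]

/-- The generator `a₂`. -/
def a2 : Equiv.Perm Wd where
  toFun := pA
  invFun := piA
  left_inv w := (a_inv_lemma w).2.1
  right_inv w := (a_inv_lemma w).1

/-- The generator `a₃`. -/
def a3 : Equiv.Perm Wd where
  toFun := qA
  invFun := qiA
  left_inv w := (a_inv_lemma w).2.2.2
  right_inv w := (a_inv_lemma w).2.2.1

lemma a_length_lemma : ∀ w : Wd, (pA w).length = w.length ∧ (qA w).length = w.length ∧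
    (piA w).length = w.length ∧ (qiA w).length = w.length := by
  intro w
  induction w with
  | nil => simp [pA, qA, piA, qiA]
  | cons b w ih =>
    cases b <;>
      simp [pA, qA, piA, qiA, ih.1, ih.2.1, ih.2.2.1, ih.2.2.2]

lemma a_ne_nil {f : Wd → Wd} (hf : ∀ w : Wd, (f w).length = w.length) {w : Wd} (hw : w ≠ []) :
    f w ≠ [] := by
  intro h
  exact hw (List.eq_nil_of_length_eq_zero (by rw [← hf w, h]; rfl))

lemma a_dropLast_lemma : ∀ w : Wd, (pA w).dropLast = pA w.dropLast ∧
    (qA w).dropLast = qA w.dropLast ∧ (piA w).dropLast = piA w.dropLast ∧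
    (qiA w).dropLast = qiA w.dropLast := by
  intro w
  induction w with
  | nil => simp [pA, qA, piA, qiA]
  | cons b w ih =>
    rcases eq_or_ne w [] with rfl | hw
    · cases b <;> simp [pA, qA, piA, qiA]
    · have hp := a_ne_nil (fun w => (a_length_lemma w).1) hw
      have hq := a_ne_nil (fun w => (a_length_lemma w).2.1) hw
      have hpi := a_ne_nil (fun w => (a_length_lemma w).2.2.1) hw
      have hqi := a_ne_nil (fun w => (a_length_lemma w).2.2.2) hw
      cases b <;>
        simp [pA, qA, piA, qiA, List.dropLast_cons_of_ne_nil hw,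
          List.dropLast_cons_of_ne_nil hp, List.dropLast_cons_of_ne_nil hq,
          List.dropLast_cons_of_ne_nil hpi, List.dropLast_cons_of_ne_nil hqi,
          ih.1, ih.2.1, ih.2.2.1, ih.2.2.2]

lemma a2_mem : a2 ∈ OmegaSG :=
  ⟨fun w => (a_length_lemma w).1, fun w => (a_dropLast_lemma w).1⟩

lemma a3_mem : a3 ∈ OmegaSG :=
  ⟨fun w => (a_length_lemma w).2.1, fun w => (a_dropLast_lemma w).2.1⟩

/-- `a₁ = σ` as an element of `Ω`. -/
def A1 : OmegaSG := swapOm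
/-- `a₂` as an element of `Ω`. -/
def A2 : OmegaSG := ⟨a2, a2_mem⟩
/-- `a₃` as an element of `Ω`. -/
def A3 : OmegaSG := ⟨a3, a3_mem⟩

/-- `G = ⟨⟨a₁, a₃⟩⟩`, the topological closure of the subgroup generated by `a₁` and `a₃`:
a model of the geometric iterated monodromy group of `f(x) = 2/(x-1)²`. -/
noncomputable def Ggrp : Subgroup OmegaSG :=
  (Subgroup.closure {A1, A3}).topologicalClosure

/-- The normal closure in `G` of the closed subgroup generated by an element `c`:
the closed subgroup generated by all `G`-conjugates of `c`. -/
noncomputable def nclG (c : OmegaSG) : Subgroup OmegaSG :=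
  (Subgroup.closure {x | ∃ g ∈ Ggrp, x = g * c * g⁻¹}).topologicalClosure

/-- `U`, the normal closure in `G` of `⟨⟨a₂a₃⁻¹⟩⟩`. -/
noncomputable def Ugrp : Subgroup OmegaSG := nclG (A2 * A3⁻¹)

/-- `H₁`, the normal closure in `G` of `⟨⟨a₁⟩⟩`. -/
noncomputable def H1grp : Subgroup OmegaSG := nclG A1

/-- `H₃`, the normal closure in `G` of `⟨⟨a₃⟩⟩`. -/
noncomputable def H3grp : Subgroup OmegaSG := nclG A3

set_option linter.unusedVariables false
namespace S14
open Equiv Subgroup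

/-! ### Basics -/

lemma omega_ext {g h : OmegaSG} (H : ∀ w : Wd, (g : Equiv.Perm Wd) w = (h : Equiv.Perm Wd) w) :
    g = h := Subtype.ext (Equiv.ext H)

lemma mul_ap (g h : OmegaSG) (w : Wd) :
    ((g * h : OmegaSG) : Equiv.Perm Wd) w = (g : Equiv.Perm Wd) ((h : Equiv.Perm Wd) w) := rfl

lemma one_ap (w : Wd) : ((1 : OmegaSG) : Equiv.Perm Wd) w = w := rfl

lemma pA_piA (w : Wd) : pA (piA w) = w := (a_inv_lemma w).1
lemma piA_pA (w : Wd) : piA (pA w) = w := (a_inv_lemma w).2.1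
lemma qA_qiA (w : Wd) : qA (qiA w) = w := (a_inv_lemma w).2.2.1
lemma qiA_qA (w : Wd) : qiA (qA w) = w := (a_inv_lemma w).2.2.2

lemma A1_ap (w : Wd) : (A1 : Equiv.Perm Wd) w = swapPerm w := rfl
lemma A2_ap (w : Wd) : (A2 : Equiv.Perm Wd) w = pA w := rfl
lemma A3_ap (w : Wd) : (A3 : Equiv.Perm Wd) w = qA w := rfl
lemma A2_inv_ap (w : Wd) : ((A2 : Equiv.Perm Wd))⁻¹ w = piA w := rfl
lemma A3_inv_ap (w : Wd) : ((A3 : Equiv.Perm Wd))⁻¹ w = qiA w := rfl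
lemma inv_coe (g : OmegaSG) : ((g⁻¹ : OmegaSG) : Equiv.Perm Wd) = (g : Equiv.Perm Wd)⁻¹ := rfl
lemma pairOm_ap (u v : OmegaSG) (w : Wd) :
    ((pairOm u v : OmegaSG) : Equiv.Perm Wd) w
      = pairFun (u : Equiv.Perm Wd) (v : Equiv.Perm Wd) w := rfl

lemma swap_swap (w : Wd) : swapPerm (swapPerm w) = w := by
  rcases w with _ | ⟨b, w⟩ <;> simp

/-! ### Pointwise identities -/

lemma pq_swap (w : Wd) : pA (qA w) = swapPerm w := by
  rcases w with _ | ⟨_ | _, w⟩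
  · rfl
  · simp [pA, qA, piA_pA]
  · simp [pA, qA, qiA_qA]

lemma qipi_swap (w : Wd) : qiA (piA w) = swapPerm w := by
  rcases w with _ | ⟨_ | _, w⟩
  · rfl
  · simp [piA, qiA, qiA_qA]
  · simp [piA, qiA, piA_pA]

lemma qp_qp (w : Wd) : qA (pA (qA (pA w))) = w := by
  rcases w with _ | ⟨_ | _, w⟩
  · rfl
  · simp [pA, qA, qiA_qA, pA_piA]
  · simp [pA, qA, qiA_qA, piA_pA, pA_piA, qA_qiA]

lemma piqi (w : Wd) : piA (qiA w) = qA (pA w) := by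
  have h1 : qA (pA (piA (qiA w))) = qA (pA (qA (pA w))) := by
    rw [pA_piA, qA_qiA, qp_qp]
  exact a2.injective (a3.injective h1)

lemma pA4 (w : Wd) : pA (pA (pA (pA w))) = w := by
  rcases w with _ | ⟨_ | _, w⟩
  · rfl
  · simp [pA, qipi_swap, swap_swap]
  · simp [pA, piqi, qiA_qA, piA_pA, qA_qiA]

lemma qA4 (w : Wd) : qA (qA (qA (qA w))) = w := by
  induction w with
  | nil => rfl
  | cons b w ih => cases b <;> simp [qA, pA4, ih]

/-! ### Group identities -/

lemma I2 : A2 * A3 = A1 := omega_ext fun w => pq_swap w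

lemma A1_sq : A1 * A1 = 1 := omega_ext fun w => swap_swap w

lemma A1_inv : A1⁻¹ = A1 := inv_eq_of_mul_eq_one_left A1_sq

lemma A3pow4 : A3 * A3 * A3 * A3 = 1 := omega_ext fun w => qA4 w

lemma A2pow4 : A2 * A2 * A2 * A2 = 1 := omega_ext fun w => pA4 w

lemma Y : A3 * A1 * A3 = A2⁻¹ * A2⁻¹ * A1 := by
  apply omega_ext
  intro w
  have e : ∀ v : Wd, ((A2⁻¹ * A2⁻¹ * A1 : OmegaSG) : Equiv.Perm Wd) v
      = piA (piA (swapPerm v)) := fun v => rfl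
  have e' : ∀ v : Wd, ((A3 * A1 * A3 : OmegaSG) : Equiv.Perm Wd) v
      = qA (swapPerm (qA v)) := fun v => rfl
  rw [e, e']
  rcases w with _ | ⟨_ | _, w⟩
  · rfl
  · simp [qA, piA]
  · simp [qA, piA]

def C : OmegaSG := A2 * A3⁻¹
def C2 : OmegaSG := A3 * C * A3⁻¹
lemma C_def : C = A2 * A3⁻¹ := rfl
lemma C2_def : C2 = A3 * C * A3⁻¹ := rfl

lemma A2_eq : A2 = A1 * A3⁻¹ := by rw [← I2]; group

lemma A3sq_inv : (A3 * A3)⁻¹ = A3 * A3 := by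
  refine inv_eq_of_mul_eq_one_left ?_
  calc A3 * A3 * (A3 * A3) = A3 * A3 * A3 * A3 := by group
  _ = 1 := A3pow4

lemma A2sq_inv : (A2 * A2)⁻¹ = A2 * A2 := by
  refine inv_eq_of_mul_eq_one_left ?_
  calc A2 * A2 * (A2 * A2) = A2 * A2 * A2 * A2 := by group
  _ = 1 := A2pow4

lemma A3isq : A3⁻¹ * A3⁻¹ = A3 * A3 := by
  calc A3⁻¹ * A3⁻¹ = (A3 * A3)⁻¹ := by group
  _ = A3 * A3 := A3sq_inv

lemma A2isq : A2⁻¹ * A2⁻¹ = A2 * A2 := by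
  calc A2⁻¹ * A2⁻¹ = (A2 * A2)⁻¹ := by group
  _ = A2 * A2 := A2sq_inv

lemma A3cube : A3 * A3 * A3 = A3⁻¹ := by
  refine (inv_eq_of_mul_eq_one_right ?_).symm
  calc A3 * (A3 * A3 * A3) = A3 * A3 * A3 * A3 := by group
  _ = 1 := A3pow4

lemma A2cube : A2 * A2 * A2 = A2⁻¹ := by
  refine (inv_eq_of_mul_eq_one_right ?_).symm
  calc A2 * (A2 * A2 * A2) = A2 * A2 * A2 * A2 := by group
  _ = 1 := A2pow4

lemma A3icube : A3⁻¹ * A3⁻¹ * A3⁻¹ = A3 := by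
  calc A3⁻¹ * A3⁻¹ * A3⁻¹ = (A3 * A3 * A3)⁻¹ := by group
  _ = A3 := by rw [A3cube, inv_inv]

lemma A2icube : A2⁻¹ * A2⁻¹ * A2⁻¹ = A2 := by
  calc A2⁻¹ * A2⁻¹ * A2⁻¹ = (A2 * A2 * A2)⁻¹ := by group
  _ = A2 := by rw [A2cube, inv_inv]

lemma C_eq : C = A1 * (A3 * A3) := by
  rw [C_def, A2_eq, ← A3isq]; group

lemma Cinv_eq : C⁻¹ = A3 * A3 * A1 := by
  rw [C_eq, mul_inv_rev, A1_inv, A3sq_inv]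

lemma C2_eq : C2 = A3 * A1 * A3 := by
  rw [C2_def, C_eq]; group

lemma C2_eq' : C2 = A2⁻¹ * A2⁻¹ * A1 := C2_eq.trans Y

lemma C2inv_eq : C2⁻¹ = A3⁻¹ * A1 * A3⁻¹ := by
  calc C2⁻¹ = (A3 * A1 * A3)⁻¹ := by rw [C2_eq]
  _ = A3⁻¹ * A1⁻¹ * A3⁻¹ := by group
  _ = A3⁻¹ * A1 * A3⁻¹ := by rw [A1_inv]

lemma C2inv_eq' : C2⁻¹ = A1 * (A2 * A2) := by
  rw [C2_eq', mul_inv_rev, A1_inv, A2isq, A2sq_inv]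

lemma A1C : C * (A3 * A3) = A1 := by
  rw [C_eq]
  calc A1 * (A3 * A3) * (A3 * A3) = A1 * (A3 * A3 * A3 * A3) := by group
  _ = A1 := by rw [A3pow4, mul_one]

lemma conj_A3_C2 : A3 * C2 * A3⁻¹ = C⁻¹ := by
  rw [Cinv_eq, C2_eq]
  calc A3 * (A3 * A1 * A3) * A3⁻¹ = A3 * A3 * A1 * (A3 * A3⁻¹) := by group
  _ = A3 * A3 * A1 := by group

lemma conj_A1_C : A1 * C * A1 = C⁻¹ := by
  rw [Cinv_eq, C_eq]
  calc A1 * (A1 * (A3 * A3)) * A1 = A1 * A1 * ((A3 * A3) * A1) := by group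
  _ = (A3 * A3) * A1 := by rw [A1_sq, one_mul]
  _ = A3 * A3 * A1 := by group

lemma conj_A1_C2 : A1 * C2 * A1 = C2⁻¹ := by
  rw [C2inv_eq', C2_eq']
  calc A1 * (A2⁻¹ * A2⁻¹ * A1) * A1 = A1 * (A2⁻¹ * A2⁻¹) * (A1 * A1) := by group
  _ = A1 * (A2⁻¹ * A2⁻¹) := by rw [A1_sq, mul_one]
  _ = A1 * (A2 * A2) := by rw [A2isq]

lemma conj_A3_Ci : A3 * C⁻¹ * A3⁻¹ = C2⁻¹ := by
  calc A3 * C⁻¹ * A3⁻¹ = (A3 * C * A3⁻¹)⁻¹ := by group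
  _ = C2⁻¹ := by rw [← C2_def]

lemma conj_A3_C2i : A3 * C2⁻¹ * A3⁻¹ = C := by
  calc A3 * C2⁻¹ * A3⁻¹ = (A3 * C2 * A3⁻¹)⁻¹ := by group
  _ = C⁻¹⁻¹ := by rw [conj_A3_C2]
  _ = C := inv_inv _

lemma conj_A3i_Ci : A3⁻¹ * C⁻¹ * A3 = C2 := by
  have h : C2 = A3⁻¹ * (A3 * C2 * A3⁻¹) * A3 := by group
  rw [conj_A3_C2] at h
  exact h.symm

lemma conj_A3i_C : A3⁻¹ * C * A3 = C2⁻¹ := by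
  calc A3⁻¹ * C * A3 = (A3⁻¹ * C⁻¹ * A3)⁻¹ := by group
  _ = C2⁻¹ := by rw [conj_A3i_Ci]

lemma conj_A3i_C2 : A3⁻¹ * C2 * A3 = C := by rw [C2_def]; group

lemma conj_A3i_C2i : A3⁻¹ * C2⁻¹ * A3 = C⁻¹ := by
  calc A3⁻¹ * C2⁻¹ * A3 = (A3⁻¹ * C2 * A3)⁻¹ := by group
  _ = C⁻¹ := by rw [conj_A3i_C2]

lemma conj_A1_Ci : A1 * C⁻¹ * A1 = C := by
  rw [← A1_inv]
  calc A1⁻¹ * C⁻¹ * A1⁻¹ = (A1 * C * A1)⁻¹ := by group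
  _ = C⁻¹⁻¹ := by rw [conj_A1_C]
  _ = C := inv_inv _

lemma conj_A1_C2i : A1 * C2⁻¹ * A1 = C2 := by
  rw [← A1_inv]
  calc A1⁻¹ * C2⁻¹ * A1⁻¹ = (A1 * C2 * A1)⁻¹ := by group
  _ = C2⁻¹⁻¹ := by rw [conj_A1_C2]
  _ = C2 := inv_inv _

end S14

namespace S14
open Equiv Subgroup

/-! ### Pair algebra -/

lemma pair_mul (u v u' v' : OmegaSG) :
    pairOm u v * pairOm u' v' = pairOm (u * u') (v * v') :=
  omega_ext fun w => by rcases w with _ | ⟨_ | _, w⟩ <;> rfl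

lemma pair_one : pairOm 1 1 = 1 :=
  omega_ext fun w => by rcases w with _ | ⟨_ | _, w⟩ <;> rfl

lemma pair_inv (u v : OmegaSG) : (pairOm u v)⁻¹ = pairOm u⁻¹ v⁻¹ := by
  refine inv_eq_of_mul_eq_one_left ?_
  rw [pair_mul, inv_mul_cancel, inv_mul_cancel, pair_one]

lemma A1_pair (u v : OmegaSG) : A1 * pairOm u v = pairOm v u * A1 :=
  omega_ext fun w => by rcases w with _ | ⟨_ | _, w⟩ <;> rfl

lemma A3_pair : A3 = pairOm A2 A3 :=
  omega_ext fun w => by rcases w with _ | ⟨_ | _, w⟩ <;> rfl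

lemma A2_pair : A2 = pairOm A3⁻¹ A2⁻¹ * A1 :=
  omega_ext fun w => by rcases w with _ | ⟨_ | _, w⟩ <;> rfl

lemma A3i_pair : (A3 : OmegaSG)⁻¹ = pairOm A2⁻¹ A3⁻¹ := by
  have h := congrArg (fun z : OmegaSG => z⁻¹) A3_pair
  simpa only [pair_inv] using h

lemma C_pair : C = pairOm (A3⁻¹ * A3⁻¹) (A2⁻¹ * A2⁻¹) * A1 := by
  calc C = (pairOm A3⁻¹ A2⁻¹ * A1) * pairOm A2⁻¹ A3⁻¹ := by
        rw [C_def, ← A2_pair, ← A3i_pair]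
  _ = pairOm A3⁻¹ A2⁻¹ * (A1 * pairOm A2⁻¹ A3⁻¹) := by group
  _ = pairOm A3⁻¹ A2⁻¹ * (pairOm A3⁻¹ A2⁻¹ * A1) := by rw [A1_pair]
  _ = pairOm A3⁻¹ A2⁻¹ * pairOm A3⁻¹ A2⁻¹ * A1 := by group
  _ = pairOm (A3⁻¹ * A3⁻¹) (A2⁻¹ * A2⁻¹) * A1 := by rw [pair_mul]

lemma C2_pair : C2 = pairOm A1 (A3 * A2) * A1 := by
  have comp1 : A2 * (A3⁻¹ * A3⁻¹) * A3⁻¹ = A1 := by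
    calc A2 * (A3⁻¹ * A3⁻¹) * A3⁻¹ = A2 * (A3⁻¹ * A3⁻¹ * A3⁻¹) := by group
    _ = A2 * A3 := by rw [A3icube]
    _ = A1 := I2
  have comp2 : A3 * (A2⁻¹ * A2⁻¹) * A2⁻¹ = A3 * A2 := by
    calc A3 * (A2⁻¹ * A2⁻¹) * A2⁻¹ = A3 * (A2⁻¹ * A2⁻¹ * A2⁻¹) := by group
    _ = A3 * A2 := by rw [A2icube]
  calc C2 = A3 * C * A3⁻¹ := C2_def
  _ = pairOm A2 A3 * (pairOm (A3⁻¹ * A3⁻¹) (A2⁻¹ * A2⁻¹) * A1) * pairOm A2⁻¹ A3⁻¹ := by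
        rw [← C_pair, ← A3i_pair, ← A3_pair]
  _ = pairOm A2 A3 * pairOm (A3⁻¹ * A3⁻¹) (A2⁻¹ * A2⁻¹) * (A1 * pairOm A2⁻¹ A3⁻¹) := by group
  _ = pairOm (A2 * (A3⁻¹ * A3⁻¹)) (A3 * (A2⁻¹ * A2⁻¹)) * (pairOm A3⁻¹ A2⁻¹ * A1) := by
        rw [pair_mul, A1_pair]
  _ = pairOm (A2 * (A3⁻¹ * A3⁻¹)) (A3 * (A2⁻¹ * A2⁻¹)) * pairOm A3⁻¹ A2⁻¹ * A1 := by group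
  _ = pairOm (A2 * (A3⁻¹ * A3⁻¹) * A3⁻¹) (A3 * (A2⁻¹ * A2⁻¹) * A2⁻¹) * A1 := by rw [pair_mul]
  _ = pairOm A1 (A3 * A2) * A1 := by rw [comp1, comp2]

lemma CC2_pair : C * C2 = pairOm C2⁻¹ C2 := by
  have e1 : A3⁻¹ * A3⁻¹ * (A3 * A2) = C2⁻¹ := by
    calc A3⁻¹ * A3⁻¹ * (A3 * A2) = A3⁻¹ * A2 := by group
    _ = A3⁻¹ * (A1 * A3⁻¹) := by rw [A2_eq]
    _ = A3⁻¹ * A1 * A3⁻¹ := by group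
    _ = C2⁻¹ := C2inv_eq.symm
  have e2 : A2⁻¹ * A2⁻¹ * A1 = C2 := C2_eq'.symm
  calc C * C2 = (pairOm (A3⁻¹ * A3⁻¹) (A2⁻¹ * A2⁻¹) * A1) * (pairOm A1 (A3 * A2) * A1) := by
        rw [← C_pair, ← C2_pair]
  _ = pairOm (A3⁻¹ * A3⁻¹) (A2⁻¹ * A2⁻¹) * (A1 * pairOm A1 (A3 * A2)) * A1 := by group
  _ = pairOm (A3⁻¹ * A3⁻¹) (A2⁻¹ * A2⁻¹) * (pairOm (A3 * A2) A1 * A1) * A1 := by rw [A1_pair]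
  _ = pairOm (A3⁻¹ * A3⁻¹) (A2⁻¹ * A2⁻¹) * pairOm (A3 * A2) A1 * (A1 * A1) := by group
  _ = pairOm (A3⁻¹ * A3⁻¹ * (A3 * A2)) (A2⁻¹ * A2⁻¹ * A1) * 1 := by rw [pair_mul, A1_sq]
  _ = pairOm C2⁻¹ C2 := by rw [mul_one, e1, e2]

lemma C2C_pair : C2 * C = pairOm C2⁻¹ C2 := by
  have f1 : A1 * (A2⁻¹ * A2⁻¹) = C2⁻¹ := by rw [A2isq]; exact C2inv_eq'.symm
  have f2 : A3 * A2 * (A3⁻¹ * A3⁻¹) = C2 := by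
    calc A3 * A2 * (A3⁻¹ * A3⁻¹) = A3 * (A1 * A3⁻¹) * (A3⁻¹ * A3⁻¹) := by rw [← A2_eq]
    _ = A3 * A1 * (A3⁻¹ * A3⁻¹ * A3⁻¹) := by group
    _ = A3 * A1 * A3 := by rw [A3icube]
    _ = C2 := C2_eq.symm
  calc C2 * C = (pairOm A1 (A3 * A2) * A1) * (pairOm (A3⁻¹ * A3⁻¹) (A2⁻¹ * A2⁻¹) * A1) := by
        rw [← C_pair, ← C2_pair]
  _ = pairOm A1 (A3 * A2) * (A1 * pairOm (A3⁻¹ * A3⁻¹) (A2⁻¹ * A2⁻¹)) * A1 := by group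
  _ = pairOm A1 (A3 * A2) * (pairOm (A2⁻¹ * A2⁻¹) (A3⁻¹ * A3⁻¹) * A1) * A1 := by rw [A1_pair]
  _ = pairOm A1 (A3 * A2) * pairOm (A2⁻¹ * A2⁻¹) (A3⁻¹ * A3⁻¹) * (A1 * A1) := by group
  _ = pairOm (A1 * (A2⁻¹ * A2⁻¹)) (A3 * A2 * (A3⁻¹ * A3⁻¹)) * 1 := by rw [pair_mul, A1_sq]
  _ = pairOm C2⁻¹ C2 := by rw [mul_one, f1, f2]

lemma comm_CC2 : C * C2 = C2 * C := CC2_pair.trans C2C_pair.symm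

lemma commCC2 : Commute C C2 := comm_CC2

lemma CC2i_pair : C * C2⁻¹ = pairOm C⁻¹ C := by
  have hC2i : C2⁻¹ = A1 * pairOm A1 (A2⁻¹ * A3⁻¹) := by
    have h := congrArg (fun z : OmegaSG => z⁻¹) C2_pair
    simp only [mul_inv_rev, pair_inv, A1_inv] at h
    rw [h]
  have g1 : A3⁻¹ * A3⁻¹ * A1 = C⁻¹ := by rw [A3isq]; exact Cinv_eq.symm
  have g2 : A2⁻¹ * A2⁻¹ * (A2⁻¹ * A3⁻¹) = C := by
    calc A2⁻¹ * A2⁻¹ * (A2⁻¹ * A3⁻¹) = A2⁻¹ * A2⁻¹ * A2⁻¹ * A3⁻¹ := by group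
    _ = A2 * A3⁻¹ := by rw [A2icube]
    _ = C := C_def.symm
  calc C * C2⁻¹
      = (pairOm (A3⁻¹ * A3⁻¹) (A2⁻¹ * A2⁻¹) * A1) * (A1 * pairOm A1 (A2⁻¹ * A3⁻¹)) := by
        rw [← C_pair, ← hC2i]
  _ = pairOm (A3⁻¹ * A3⁻¹) (A2⁻¹ * A2⁻¹) * (A1 * A1) * pairOm A1 (A2⁻¹ * A3⁻¹) := by group
  _ = pairOm (A3⁻¹ * A3⁻¹) (A2⁻¹ * A2⁻¹) * pairOm A1 (A2⁻¹ * A3⁻¹) := by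
        rw [A1_sq, mul_one]
  _ = pairOm (A3⁻¹ * A3⁻¹ * A1) (A2⁻¹ * A2⁻¹ * (A2⁻¹ * A3⁻¹)) := by rw [pair_mul]
  _ = pairOm C⁻¹ C := by rw [g1, g2]

lemma pairOm_CCi : pairOm C C⁻¹ = C2 * C⁻¹ := by
  have h := congrArg (fun z : OmegaSG => z⁻¹) CC2i_pair
  simp only [mul_inv_rev, inv_inv, pair_inv] at h
  exact h.symm

lemma pairOm_C2C2i : pairOm C2 C2⁻¹ = C2⁻¹ * C⁻¹ := by
  have h := congrArg (fun z : OmegaSG => z⁻¹) CC2_pair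
  simp only [mul_inv_rev, inv_inv, pair_inv] at h
  exact h.symm

/-! ### The subgroup `A0` -/

def A0 : Subgroup OmegaSG := Subgroup.closure {C, C2}

lemma C_mem : C ∈ A0 := subset_closure (by simp)
lemma C2_mem : C2 ∈ A0 := subset_closure (by simp)

lemma A0_nf {v : OmegaSG} (hv : v ∈ A0) : ∃ s t : ℤ, v = C ^ s * C2 ^ t := by
  induction hv using Subgroup.closure_induction with
  | mem x hx =>
      rcases hx with rfl | rfl
      · exact ⟨1, 0, by group⟩
      · exact ⟨0, 1, by group⟩
  | one => exact ⟨0, 0, by group⟩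
  | mul x y hx hy ihx ihy =>
      obtain ⟨s, t, rfl⟩ := ihx
      obtain ⟨s', t', rfl⟩ := ihy
      refine ⟨s + s', t + t', ?_⟩
      have h := (commCC2.zpow_zpow s' t).eq
      calc C ^ s * C2 ^ t * (C ^ s' * C2 ^ t') = C ^ s * (C2 ^ t * C ^ s') * C2 ^ t' := by group
      _ = C ^ s * (C ^ s' * C2 ^ t) * C2 ^ t' := by rw [← h]
      _ = C ^ s * C ^ s' * (C2 ^ t * C2 ^ t') := by group
      _ = C ^ (s + s') * C2 ^ (t + t') := by rw [← zpow_add, ← zpow_add]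
  | inv x hx ihx =>
      obtain ⟨s, t, rfl⟩ := ihx
      refine ⟨-s, -t, ?_⟩
      have h := (commCC2.zpow_zpow (-s) (-t)).eq
      calc (C ^ s * C2 ^ t)⁻¹ = C2 ^ (-t) * C ^ (-s) := by group
      _ = C ^ (-s) * C2 ^ (-t) := h.symm

lemma A0_mem_of_nf (s t : ℤ) : C ^ s * C2 ^ t ∈ A0 :=
  mul_mem (zpow_mem C_mem s) (zpow_mem C2_mem t)

/-! ### Conjugation formulas on `A0` -/

lemma conjA3_nf (s t : ℤ) : A3 * (C ^ s * C2 ^ t) * A3⁻¹ = C2 ^ s * C ^ (-t) := by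
  have h1 : A3 * C ^ s * A3⁻¹ = C2 ^ s := by rw [← conj_zpow, ← C2_def]
  have h2 : A3 * C2 ^ t * A3⁻¹ = C ^ (-t) := by
    rw [← conj_zpow, conj_A3_C2, inv_zpow, ← zpow_neg]
  calc A3 * (C ^ s * C2 ^ t) * A3⁻¹ = (A3 * C ^ s * A3⁻¹) * (A3 * C2 ^ t * A3⁻¹) := by group
  _ = C2 ^ s * C ^ (-t) := by rw [h1, h2]

lemma conjA3i_nf (s t : ℤ) : A3⁻¹ * (C ^ s * C2 ^ t) * A3 = C2 ^ (-s) * C ^ t := by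
  have h1 : A3⁻¹ * C ^ s * A3 = C2 ^ (-s) := by
    have h := conj_zpow (i := s) (a := A3⁻¹) (b := C)
    rw [inv_inv, conj_A3i_C, inv_zpow, ← zpow_neg] at h
    exact h.symm
  have h2 : A3⁻¹ * C2 ^ t * A3 = C ^ t := by
    have h := conj_zpow (i := t) (a := A3⁻¹) (b := C2)
    rw [inv_inv, conj_A3i_C2] at h
    exact h.symm
  calc A3⁻¹ * (C ^ s * C2 ^ t) * A3 = (A3⁻¹ * C ^ s * A3) * (A3⁻¹ * C2 ^ t * A3) := by group
  _ = C2 ^ (-s) * C ^ t := by rw [h1, h2]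

lemma conjA3_mem {v : OmegaSG} (hv : v ∈ A0) : A3 * v * A3⁻¹ ∈ A0 := by
  obtain ⟨s, t, rfl⟩ := A0_nf hv
  rw [conjA3_nf]
  exact mul_mem (zpow_mem C2_mem s) (zpow_mem C_mem (-t))

lemma conjA3i_mem {v : OmegaSG} (hv : v ∈ A0) : A3⁻¹ * v * A3 ∈ A0 := by
  obtain ⟨s, t, rfl⟩ := A0_nf hv
  rw [conjA3i_nf]
  exact mul_mem (zpow_mem C2_mem (-s)) (zpow_mem C_mem t)

lemma conjA32_inv {v : OmegaSG} (hv : v ∈ A0) : (A3 * A3) * v * (A3 * A3)⁻¹ = v⁻¹ := by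
  obtain ⟨s, t, rfl⟩ := A0_nf hv
  have hc2 : A3 * C2 ^ s * A3⁻¹ = C ^ (-s) := by
    rw [← conj_zpow, conj_A3_C2, inv_zpow, ← zpow_neg]
  have hc : A3 * C ^ (-t) * A3⁻¹ = C2 ^ (-t) := by rw [← conj_zpow, ← C2_def]
  have h1 : (A3 * A3) * (C ^ s * C2 ^ t) * (A3 * A3)⁻¹
      = A3 * (A3 * (C ^ s * C2 ^ t) * A3⁻¹) * A3⁻¹ := by group
  rw [h1, conjA3_nf]
  calc A3 * (C2 ^ s * C ^ (-t)) * A3⁻¹ = (A3 * C2 ^ s * A3⁻¹) * (A3 * C ^ (-t) * A3⁻¹) := by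
        group
  _ = C ^ (-s) * C2 ^ (-t) := by rw [hc2, hc]
  _ = (C2 ^ t * C ^ s)⁻¹ := by group
  _ = (C ^ s * C2 ^ t)⁻¹ := by rw [(commCC2.zpow_zpow s t).eq]

end S14

namespace S14
open Equiv Subgroup

/-! ### The level-one parity homomorphism -/

lemma lv1 (g : OmegaSG) (b : Bool) :
    (g : Equiv.Perm Wd) [b] = [false] ∨ (g : Equiv.Perm Wd) [b] = [true] := by
  have hl : ((g : Equiv.Perm Wd) [b]).length = 1 := mem_omega_length g.2 [b]
  rcases List.length_eq_one_iff.mp hl with ⟨a, ha⟩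
  cases a
  · exact Or.inl ha
  · exact Or.inr ha

lemma flip_tt {g : OmegaSG} (h : (g : Equiv.Perm Wd) [false] = [false]) :
    (g : Equiv.Perm Wd) [true] = [true] := by
  rcases lv1 g true with h' | h'
  · have := (g : Equiv.Perm Wd).injective (h.trans h'.symm)
    simp at this
  · exact h'

lemma flip_tf {g : OmegaSG} (h : (g : Equiv.Perm Wd) [false] = [true]) :
    (g : Equiv.Perm Wd) [true] = [false] := by
  rcases lv1 g true with h' | h'
  · exact h'
  · have := (g : Equiv.Perm Wd).injective (h.trans h'.symm)
    simp at this

def parU : OmegaSG →* ℤˣ where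
  toFun g := if (g : Equiv.Perm Wd) [false] = [false] then 1 else -1
  map_one' := if_pos rfl
  map_mul' g h := by
    have key : ((g * h : OmegaSG) : Equiv.Perm Wd) [false]
        = (g : Equiv.Perm Wd) ((h : Equiv.Perm Wd) [false]) := rfl
    rw [key]
    rcases lv1 h false with hh | hh <;> rw [hh] <;> rcases lv1 g false with hg | hg
    · simp [hg]
    · simp [hg]
    · simp [hg, flip_tt hg]
    · simp [hg, flip_tf hg]

lemma parU_apply (g : OmegaSG) :
    parU g = if (g : Equiv.Perm Wd) [false] = [false] then 1 else -1 := rfl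

lemma parU_C : parU C = -1 := by
  rw [parU_apply, if_neg]
  rw [show (C : Equiv.Perm Wd) [false] = [true] from rfl]
  simp

lemma parU_C2 : parU C2 = -1 := by
  rw [show C2 = A3 * C * A3⁻¹ from rfl, map_mul, map_mul, parU_C]
  have h1 : parU A3 = 1 := by
    rw [parU_apply, if_pos (show (A3 : Equiv.Perm Wd) [false] = [false] from rfl)]
  have h2 : parU A3⁻¹ = 1 := by rw [map_inv, h1]; rfl
  rw [h1, h2, one_mul, mul_one]

lemma parU_A3 : parU A3 = 1 := by
  rw [parU_apply, if_pos (show (A3 : Equiv.Perm Wd) [false] = [false] from rfl)]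

lemma parU_pairOm (u v : OmegaSG) : parU (pairOm u v) = 1 := by
  rw [parU_apply, if_pos]
  show pairFun (u : Equiv.Perm Wd) (v : Equiv.Perm Wd) (false :: []) = [false]
  rw [pairFun_false, mem_omega_nil u.2]

/-! ### Agreement up to level `n` -/

def agree (n : ℕ) (g h : OmegaSG) : Prop :=
  ∀ w : Wd, w.length ≤ n → (g : Equiv.Perm Wd) w = (h : Equiv.Perm Wd) w

lemma agree_of_eq {n : ℕ} {g h : OmegaSG} (e : g = h) : agree n g h := fun w _ => by rw [e]

lemma agree_refl (n : ℕ) (g : OmegaSG) : agree n g g := fun _ _ => rfl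

lemma agree_symm {n : ℕ} {g h : OmegaSG} (H : agree n g h) : agree n h g :=
  fun w hw => (H w hw).symm

lemma agree_trans {n : ℕ} {g h k : OmegaSG} (H1 : agree n g h) (H2 : agree n h k) :
    agree n g k := fun w hw => (H1 w hw).trans (H2 w hw)

lemma agree_mono {m n : ℕ} (hmn : m ≤ n) {g h : OmegaSG} (H : agree n g h) : agree m g h :=
  fun w hw => H w (hw.trans hmn)

lemma agree_mul {n : ℕ} {g h g' h' : OmegaSG} (H1 : agree n g g') (H2 : agree n h h') :
    agree n (g * h) (g' * h') := by
  intro w hw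
  rw [mul_ap, mul_ap, H2 w hw, H1 _ (by rw [mem_omega_length h'.2]; exact hw)]

lemma agree_inv {n : ℕ} {g h : OmegaSG} (H : agree n g h) : agree n g⁻¹ h⁻¹ := by
  intro w hw
  have hv : ((g⁻¹ : OmegaSG) : Equiv.Perm Wd) w = (g : Equiv.Perm Wd)⁻¹ w := rfl
  have hv' : ((h⁻¹ : OmegaSG) : Equiv.Perm Wd) w = (h : Equiv.Perm Wd)⁻¹ w := rfl
  rw [hv, hv']
  apply (h : Equiv.Perm Wd).injective
  rw [show (h : Equiv.Perm Wd) ((h : Equiv.Perm Wd)⁻¹ w) = w from Equiv.apply_symm_apply _ _]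
  have hl : ((g : Equiv.Perm Wd)⁻¹ w).length ≤ n := by
    have hlen := mem_omega_length (g⁻¹ : OmegaSG).2 w
    rw [show ((g⁻¹ : OmegaSG) : Equiv.Perm Wd) w = (g : Equiv.Perm Wd)⁻¹ w from rfl] at hlen
    rw [hlen]; exact hw
  rw [← H _ hl, show (g : Equiv.Perm Wd) ((g : Equiv.Perm Wd)⁻¹ w) = w from Equiv.apply_symm_apply _ _]

lemma eq_of_agree_all {g h : OmegaSG} (H : ∀ n, agree n g h) : g = h :=
  omega_ext fun w => H w.length w le_rfl

lemma agree_of_level {n : ℕ} {g h : OmegaSG}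
    (H : ∀ w : Wd, w.length = n → (g : Equiv.Perm Wd) w = (h : Equiv.Perm Wd) w) :
    agree n g h := by
  have aux : ∀ j : ℕ, ∀ w : Wd, w.length + j = n →
      (g : Equiv.Perm Wd) w = (h : Equiv.Perm Wd) w := by
    intro j
    induction j with
    | zero => intro w hw; exact H w (by simpa using hw)
    | succ j ih =>
        intro w hw
        have hg : (g : Equiv.Perm Wd) w = ((g : Equiv.Perm Wd) (w ++ [false])).dropLast := by
          rw [g.2.2 (w ++ [false]), List.dropLast_concat]
        have hh : (h : Equiv.Perm Wd) w = ((h : Equiv.Perm Wd) (w ++ [false])).dropLast := by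
          rw [h.2.2 (w ++ [false]), List.dropLast_concat]
        have hlen : (w ++ [false]).length + j = n := by
          simp only [List.length_append, List.length_cons, List.length_nil]
          omega
        rw [hg, hh, ih (w ++ [false]) hlen]
  intro w hw
  exact aux (n - w.length) w (by omega)

lemma agree_one_zpow {n : ℕ} {g : OmegaSG} (H : agree n g 1) (s : ℤ) : agree n (g ^ s) 1 := by
  induction s using Int.induction_on with
  | zero => exact agree_of_eq (by group)
  | succ k ih =>
      have h2 : agree n (g ^ (k : ℤ) * g) 1 := by simpa using agree_mul ih H
      refine agree_trans (agree_of_eq ?_) h2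
      rw [zpow_add, zpow_one]
  | pred k ih =>
      have h2 : agree n (g ^ (-(k : ℤ)) * g⁻¹) 1 := by simpa using agree_mul ih (agree_inv H)
      refine agree_trans (agree_of_eq ?_) h2
      rw [sub_eq_add_neg, zpow_add, zpow_neg_one]

lemma agree_pair {n : ℕ} {u v u' v' : OmegaSG} (H1 : agree n u u') (H2 : agree n v v') :
    agree (n + 1) (pairOm u v) (pairOm u' v') := by
  intro w hw
  rw [pairOm_ap, pairOm_ap]
  rcases w with _ | ⟨_ | _, w⟩
  · rfl
  · simp only [pairFun_false]
    rw [H1 w (by simp at hw; omega)]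
  · simp only [pairFun_true]
    rw [H2 w (by simp at hw; omega)]

lemma agree_pair_fst {n : ℕ} {u v u' v' : OmegaSG}
    (H : agree (n + 1) (pairOm u v) (pairOm u' v')) : agree n u u' := by
  intro w hw
  have h := H (false :: w) (by simp; omega)
  rw [pairOm_ap, pairOm_ap, pairFun_false, pairFun_false] at h
  simpa using h

lemma agree_pair_snd {n : ℕ} {u v u' v' : OmegaSG}
    (H : agree (n + 1) (pairOm u v) (pairOm u' v')) : agree n v v' := by
  intro w hw
  have h := H (true :: w) (by simp; omega)
  rw [pairOm_ap, pairOm_ap, pairFun_true, pairFun_true] at h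
  simpa using h

lemma parU_agree {g h : OmegaSG} (H : agree 1 g h) : parU g = parU h := by
  rw [parU_apply, parU_apply, H [false] (by simp)]

/-! ### Closure membership via finite-level agreement -/

lemma mem_topClosure_iff {H : Subgroup OmegaSG} {g : OmegaSG} :
    g ∈ H.topologicalClosure ↔ ∀ n, ∃ h ∈ H, agree n g h := by
  have hmem : g ∈ H.topologicalClosure ↔ g ∈ _root_.closure ((H : Set OmegaSG)) := Iff.rfl
  rw [hmem, _root_.mem_closure_iff]
  constructor
  · intro hg n
    have ho : IsOpen (⋂ w : Lv n, {k : OmegaSG | (k : Equiv.Perm Wd) w.1 = (g : Equiv.Perm Wd) w.1}) := by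
      refine isOpen_iInter_of_finite fun w => ?_
      have : Continuous fun k : OmegaSG => (k : Equiv.Perm Wd) w.1 :=
        (continuous_permApply w.1).comp continuous_subtype_val
      exact this.isOpen_preimage {(g : Equiv.Perm Wd) w.1} (isOpen_discrete _)
    obtain ⟨k, hk1, hk2⟩ := hg _ ho (by simp)
    refine ⟨k, hk2, agree_of_level fun w hw => ?_⟩
    have := Set.mem_iInter.mp hk1 ⟨w, hw⟩
    exact this.symm
  · intro hh o ho hgo
    obtain ⟨U, hU, rfl⟩ := isOpen_induced_iff.mp ho
    obtain ⟨W, hW, rfl⟩ := isOpen_induced_iff.mp hU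
    obtain ⟨I, u, hu, hsub⟩ := isOpen_pi_iff.mp hW _ hgo
    obtain ⟨k, hkH, hk⟩ := hh (I.sup List.length)
    refine ⟨k, ?_, hkH⟩
    refine hsub fun w hw => ?_
    have : (k : Equiv.Perm Wd) w = (g : Equiv.Perm Wd) w :=
      (hk w (Finset.le_sup (f := List.length) hw)).symm
    show ((k : Equiv.Perm Wd) : Wd → Wd) w ∈ u w
    rw [this]
    exact (hu w hw).2

end S14

namespace S14
open Equiv Subgroup

/-! ### Decidable level-4 facts -/

def agree4 (g h : OmegaSG) : Prop :=
  ∀ w : Lv 4, (g : Equiv.Perm Wd) w.1 = (h : Equiv.Perm Wd) w.1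

instance decAgree4 (g h : OmegaSG) : Decidable (agree4 g h) := by
  unfold agree4; infer_instance

lemma agree_of_agree4 {g h : OmegaSG} (H : agree4 g h) : agree 4 g h :=
  agree_of_level fun w hw => H ⟨w, hw⟩

lemma agree4_of_agree {g h : OmegaSG} (H : agree 4 g h) : agree4 g h :=
  fun w => H w.1 (le_of_eq w.2)

lemma agree4_symm {g h : OmegaSG} (H : agree4 g h) : agree4 h g := fun w => (H w).symm

lemma D1 : agree4 (C * C * C * C) 1 := by decide
lemma D2 : agree4 (C2 * C2 * C2 * C2) 1 := by decide
lemma D3 : ∀ i j : Fin 4, ¬ agree4 (A3 * A3) (C ^ (i : ℕ) * C2 ^ (j : ℕ)) := by decide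
lemma D4 : ∀ i j : Fin 4, (i : ℕ) % 2 = 1 → (j : ℕ) % 2 = 1 →
    ¬ agree4 (C ^ (i : ℕ) * C2 ^ (j : ℕ)) 1 := by decide

/-! ### Exponent reduction -/

lemma zpow_red_agree {g : OmegaSG} (hg : agree4 (g * g * g * g) 1) (s : ℤ) :
    agree 4 (g ^ s) (g ^ ((s % 4).toNat)) := by
  have h4 : g ^ (4 : ℤ) = g * g * g * g := by
    rw [show (4 : ℤ) = ((4 : ℕ) : ℤ) from rfl, zpow_natCast, pow_succ, pow_succ, pow_succ,
      pow_one]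
  have h1 : agree 4 (g ^ (4 : ℤ)) 1 := by rw [h4]; exact agree_of_agree4 hg
  have h2 : agree 4 ((g ^ (4 : ℤ)) ^ (s / 4)) 1 := agree_one_zpow h1 _
  have key : g ^ s = (g ^ (4 : ℤ)) ^ (s / 4) * g ^ (s % 4) := by
    rw [← zpow_mul, ← zpow_add, Int.mul_ediv_add_emod]
  have h3 : agree 4 (g ^ s) (1 * g ^ (s % 4)) := by
    rw [key]; exact agree_mul h2 (agree_refl _ _)
  refine agree_trans h3 (agree_of_eq ?_)
  rw [one_mul, ← zpow_natCast, Int.toNat_of_nonneg (Int.emod_nonneg s (by norm_num))]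

lemma emod4_bounds (s : ℤ) : (s % 4).toNat < 4 := by
  have h1 := Int.emod_lt_of_pos s (show (0 : ℤ) < 4 by norm_num)
  have h2 := Int.emod_nonneg s (show (4 : ℤ) ≠ 0 by norm_num)
  omega

lemma noA32 (s t : ℤ) : ¬ agree 4 (A3 * A3) (C ^ s * C2 ^ t) := by
  intro h
  have hred : agree 4 (C ^ s * C2 ^ t) (C ^ ((s % 4).toNat) * C2 ^ ((t % 4).toNat)) :=
    agree_mul (zpow_red_agree D1 s) (zpow_red_agree D2 t)
  exact D3 ⟨(s % 4).toNat, emod4_bounds s⟩ ⟨(t % 4).toNat, emod4_bounds t⟩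
    (agree4_of_agree (agree_trans h hred))

lemma noOdd (s t : ℤ) (hs : s % 2 = 1) (ht : t % 2 = 1) : ¬ agree 4 (C ^ s * C2 ^ t) 1 := by
  intro h
  have hred : agree 4 (C ^ s * C2 ^ t) (C ^ ((s % 4).toNat) * C2 ^ ((t % 4).toNat)) :=
    agree_mul (zpow_red_agree D1 s) (zpow_red_agree D2 t)
  have hps : ((s % 4).toNat) % 2 = 1 := by
    have := Int.emod_emod_of_dvd s (show (2 : ℤ) ∣ 4 by norm_num)
    have h2 := Int.emod_nonneg s (show (4 : ℤ) ≠ 0 by norm_num)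
    omega
  have hpt : ((t % 4).toNat) % 2 = 1 := by
    have := Int.emod_emod_of_dvd t (show (2 : ℤ) ∣ 4 by norm_num)
    have h2 := Int.emod_nonneg t (show (4 : ℤ) ≠ 0 by norm_num)
    omega
  exact D4 ⟨(s % 4).toNat, emod4_bounds s⟩ ⟨(t % 4).toNat, emod4_bounds t⟩ hps hpt
    (agree4_of_agree (agree_trans (agree_symm hred) h))

/-! ### More exact identities -/

lemma A3_zpow_four : A3 ^ (4 : ℤ) = 1 := by
  have h : A3 ^ (4 : ℤ) = A3 * A3 * A3 * A3 := by
    rw [show (4 : ℤ) = ((4 : ℕ) : ℤ) from rfl, zpow_natCast, pow_succ, pow_succ, pow_succ,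
      pow_one]
  rw [h, A3pow4]

lemma A3_zpow_red (k : ℤ) : A3 ^ k = A3 ^ ((k % 4).toNat) := by
  have key : A3 ^ k = (A3 ^ (4 : ℤ)) ^ (k / 4) * A3 ^ (k % 4) := by
    rw [← zpow_mul, ← zpow_add, Int.mul_ediv_add_emod]
  rw [key, A3_zpow_four, one_zpow, one_mul, ← zpow_natCast,
    Int.toNat_of_nonneg (Int.emod_nonneg k (by norm_num))]

lemma A3A2_eq : A3 * A2 = C2 * (A3 * A3) := by
  rw [C2_eq, A2_eq, ← A3cube]
  group

lemma A33A23 : A3 * A3 * A3 * (A2 * A2 * A2) = C * (A3 * A3) := by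
  calc A3 * A3 * A3 * (A2 * A2 * A2) = A3⁻¹ * A2⁻¹ := by rw [A3cube, A2cube]
  _ = (A2 * A3)⁻¹ := by group
  _ = A1⁻¹ := by rw [I2]
  _ = A1 := A1_inv
  _ = C * (A3 * A3) := A1C.symm

lemma A32A22 : (A3 * A3) * (A2 * A2) = C2⁻¹ * C⁻¹ := by
  have h1 : A2 * A2 = C2 * A1 := by
    rw [← A2isq, C2_eq']
    rw [show A2⁻¹ * A2⁻¹ * A1 * A1 = A2⁻¹ * A2⁻¹ * (A1 * A1) from by group, A1_sq, mul_one]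
  have h2 : (A3 * A3) * C2 = C2⁻¹ * (A3 * A3) := by
    have h := conjA32_inv C2_mem
    calc (A3 * A3) * C2 = (A3 * A3) * C2 * (A3 * A3)⁻¹ * (A3 * A3) := by group
    _ = C2⁻¹ * (A3 * A3) := by rw [h]
  calc (A3 * A3) * (A2 * A2) = (A3 * A3) * C2 * A1 := by rw [h1]; group
  _ = C2⁻¹ * (A3 * A3) * A1 := by rw [h2]
  _ = C2⁻¹ * (A3 * A3 * A1) := by group
  _ = C2⁻¹ * C⁻¹ := by rw [← Cinv_eq]

lemma A0_mul_nf (a b p q : ℤ) :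
    (C ^ a * C2 ^ b) * (C ^ p * C2 ^ q) = C ^ (a + p) * C2 ^ (b + q) := by
  have h := (commCC2.zpow_zpow p b).eq
  calc (C ^ a * C2 ^ b) * (C ^ p * C2 ^ q) = C ^ a * (C2 ^ b * C ^ p) * C2 ^ q := by group
  _ = C ^ a * (C ^ p * C2 ^ b) * C2 ^ q := by rw [← h]
  _ = C ^ a * C ^ p * (C2 ^ b * C2 ^ q) := by group
  _ = C ^ (a + p) * C2 ^ (b + q) := by rw [← zpow_add, ← zpow_add]

/-! ### pair powers -/

lemma pair_zpow (u v : OmegaSG) (n : ℤ) : (pairOm u v) ^ n = pairOm (u ^ n) (v ^ n) := by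
  induction n using Int.induction_on with
  | zero => rw [zpow_zero, zpow_zero, zpow_zero, pair_one]
  | succ k ih =>
      have hstep : ∀ g : OmegaSG, g ^ ((k : ℤ) + 1) = g ^ (k : ℤ) * g := fun g => by
        rw [zpow_add, zpow_one]
      rw [hstep, hstep, hstep, ih, pair_mul]
  | pred k ih =>
      have hstep : ∀ g : OmegaSG, g ^ (-(k : ℤ) - 1) = g ^ (-(k : ℤ)) * g⁻¹ := fun g => by
        rw [sub_eq_add_neg, zpow_add, zpow_neg_one]
      rw [hstep, hstep, hstep, ih, pair_inv, pair_mul]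

lemma pair_pow (u v : OmegaSG) (n : ℕ) : (pairOm u v) ^ n = pairOm (u ^ n) (v ^ n) := by
  have h := pair_zpow u v n
  rw [zpow_natCast, zpow_natCast, zpow_natCast] at h
  exact h

/-! ### Gamma and its normal form -/

lemma Gam_def : Ggrp = (Subgroup.closure {A1, A3}).topologicalClosure := rfl

lemma A1_mem_Gam : A1 ∈ Subgroup.closure {A1, A3} := subset_closure (by simp)
lemma A3_mem_Gam : A3 ∈ Subgroup.closure {A1, A3} := subset_closure (by simp)
lemma A2_mem_Gam : A2 ∈ Subgroup.closure {A1, A3} := by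
  rw [A2_eq]; exact mul_mem A1_mem_Gam (inv_mem A3_mem_Gam)
lemma C_mem_Gam : C ∈ Subgroup.closure {A1, A3} := by
  rw [C_def]; exact mul_mem A2_mem_Gam (inv_mem A3_mem_Gam)
lemma C2_mem_Gam : C2 ∈ Subgroup.closure {A1, A3} := by
  rw [C2_def]; exact mul_mem (mul_mem A3_mem_Gam C_mem_Gam) (inv_mem A3_mem_Gam)

lemma A3_mem_Ggrp : A3 ∈ Ggrp := (Subgroup.closure {A1, A3}).le_topologicalClosure A3_mem_Gam

lemma conjA3_zpow_mem (k : ℤ) {v : OmegaSG} (hv : v ∈ A0) : A3 ^ k * v * (A3 ^ k)⁻¹ ∈ A0 := by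
  induction k using Int.induction_on with
  | zero => simpa using hv
  | succ n ih =>
      have e : A3 ^ ((n : ℤ) + 1) * v * (A3 ^ ((n : ℤ) + 1))⁻¹
          = A3 * (A3 ^ (n : ℤ) * v * (A3 ^ (n : ℤ))⁻¹) * A3⁻¹ := by group
      rw [e]; exact conjA3_mem ih
  | pred n ih =>
      have e : A3 ^ (-(n : ℤ) - 1) * v * (A3 ^ (-(n : ℤ) - 1))⁻¹
          = A3⁻¹ * (A3 ^ (-(n : ℤ)) * v * (A3 ^ (-(n : ℤ)))⁻¹) * A3 := by group
      rw [e]; exact conjA3i_mem ih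

lemma conjA3_pow_mem (n : ℕ) {v : OmegaSG} (hv : v ∈ A0) : A3 ^ n * v * (A3 ^ n)⁻¹ ∈ A0 := by
  induction n with
  | zero => simpa using hv
  | succ n ih =>
      have e : A3 ^ (n + 1) * v * (A3 ^ (n + 1))⁻¹
          = A3 * (A3 ^ n * v * (A3 ^ n)⁻¹) * A3⁻¹ := by rw [pow_succ]; group
      rw [e]; exact conjA3_mem ih

lemma Gam_nf {h : OmegaSG} (hh : h ∈ Subgroup.closure {A1, A3}) :
    ∃ v ∈ A0, ∃ k : ℤ, h = v * A3 ^ k := by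
  induction hh using Subgroup.closure_induction with
  | mem x hx =>
      rcases hx with rfl | rfl
      · refine ⟨C, C_mem, 2, ?_⟩
        rw [show (A3 : OmegaSG) ^ (2 : ℤ) = A3 * A3 from by
          rw [show (2 : ℤ) = ((2 : ℕ) : ℤ) from rfl, zpow_natCast, pow_two]]
        exact A1C.symm
      · exact ⟨1, one_mem _, 1, by group⟩
  | one => exact ⟨1, one_mem _, 0, by group⟩
  | mul x y hx hy ihx ihy =>
      obtain ⟨v, hv, k, rfl⟩ := ihx
      obtain ⟨w, hw, l, rfl⟩ := ihy
      exact ⟨v * (A3 ^ k * w * (A3 ^ k)⁻¹), mul_mem hv (conjA3_zpow_mem k hw), k + l, by group⟩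
  | inv x hx ihx =>
      obtain ⟨v, hv, k, rfl⟩ := ihx
      exact ⟨A3 ^ (-k) * v⁻¹ * (A3 ^ (-k))⁻¹, conjA3_zpow_mem (-k) (inv_mem hv), -k, by group⟩

lemma mem_Ggrp_iff {g : OmegaSG} :
    g ∈ Ggrp ↔ ∀ n, ∃ h ∈ Subgroup.closure {A1, A3}, agree n g h := mem_topClosure_iff

/-! ### Identification of `Ugrp` -/

def inS4 (x : OmegaSG) : Prop := x = C ∨ x = C2 ∨ x = C⁻¹ ∨ x = C2⁻¹

lemma inS4_mem_A0 {x : OmegaSG} (h : inS4 x) : x ∈ A0 := by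
  rcases h with rfl | rfl | rfl | rfl
  exacts [C_mem, C2_mem, inv_mem C_mem, inv_mem C2_mem]

lemma S4_conj_A1 {x : OmegaSG} (h : inS4 x) : inS4 (A1 * x * A1) := by
  rcases h with rfl | rfl | rfl | rfl
  · exact Or.inr (Or.inr (Or.inl conj_A1_C))
  · exact Or.inr (Or.inr (Or.inr conj_A1_C2))
  · exact Or.inl conj_A1_Ci
  · exact Or.inr (Or.inl conj_A1_C2i)

lemma S4_conj_A3 {x : OmegaSG} (h : inS4 x) : inS4 (A3 * x * A3⁻¹) := by
  rcases h with rfl | rfl | rfl | rfl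
  · exact Or.inr (Or.inl C2_def.symm)
  · exact Or.inr (Or.inr (Or.inl conj_A3_C2))
  · exact Or.inr (Or.inr (Or.inr conj_A3_Ci))
  · exact Or.inl conj_A3_C2i

lemma S4_conj_A3i {x : OmegaSG} (h : inS4 x) : inS4 (A3⁻¹ * x * A3) := by
  rcases h with rfl | rfl | rfl | rfl
  · exact Or.inr (Or.inr (Or.inr conj_A3i_C))
  · exact Or.inl conj_A3i_C2
  · exact Or.inr (Or.inl conj_A3i_Ci)
  · exact Or.inr (Or.inr (Or.inl conj_A3i_C2i))

lemma discrete_conj {h : OmegaSG} (hh : h ∈ Subgroup.closure {A1, A3}) :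
    ∀ x, inS4 x → inS4 (h * x * h⁻¹) ∧ inS4 (h⁻¹ * x * h) := by
  induction hh using Subgroup.closure_induction with
  | mem g hg =>
      rcases hg with rfl | rfl
      · intro x hx
        rw [A1_inv]
        exact ⟨S4_conj_A1 hx, S4_conj_A1 hx⟩
      · intro x hx
        exact ⟨S4_conj_A3 hx, S4_conj_A3i hx⟩
  | one => intro x hx; constructor <;> simpa using hx
  | mul g k hg hk ihg ihk =>
      intro x hx
      constructor
      · have e : g * k * x * (g * k)⁻¹ = g * (k * x * k⁻¹) * g⁻¹ := by group
        rw [e]; exact (ihg _ (ihk x hx).1).1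
      · have e : (g * k)⁻¹ * x * (g * k) = k⁻¹ * (g⁻¹ * x * g) * k := by group
        rw [e]; exact (ihk _ (ihg x hx).2).2
  | inv g hg ihg =>
      intro x hx
      rw [inv_inv]
      exact ⟨(ihg x hx).2, (ihg x hx).1⟩

lemma S4_eq_of_agree4 {a b : OmegaSG} (ha : inS4 a) (hb : inS4 b) (h : agree4 a b) : a = b := by
  rcases ha with rfl | rfl | rfl | rfl <;> rcases hb with rfl | rfl | rfl | rfl <;>
    first
      | rfl
      | exact absurd h (by decide)
      | exact absurd (agree4_symm h) (by decide)

lemma Ggrp_conj {g : OmegaSG} (hg : g ∈ Ggrp) : inS4 (g * C * g⁻¹) := by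
  have happ : ∀ n, ∃ s, inS4 s ∧ agree n (g * C * g⁻¹) s := by
    intro n
    obtain ⟨h, hΓ, ha⟩ := mem_Ggrp_iff.mp hg n
    exact ⟨h * C * h⁻¹, (discrete_conj hΓ C (Or.inl rfl)).1,
      agree_mul (agree_mul ha (agree_refl _ _)) (agree_inv ha)⟩
  obtain ⟨s0, hs0, ha0⟩ := happ 4
  have hall : ∀ n, agree n (g * C * g⁻¹) s0 := by
    intro n
    obtain ⟨s, hs, ha⟩ := happ (max n 4)
    have h44 : agree4 s s0 := agree4_of_agree
      (agree_trans (agree_symm (agree_mono (le_max_right n 4) ha)) ha0)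
    rw [← S4_eq_of_agree4 hs hs0 h44]
    exact agree_mono (le_max_left n 4) ha
  rw [eq_of_agree_all hall]
  exact hs0

lemma genset_eq :
    Subgroup.closure {x : OmegaSG | ∃ g ∈ Ggrp, x = g * C * g⁻¹} = A0 := by
  refine le_antisymm ((closure_le _).mpr ?_) ((closure_le _).mpr ?_)
  · rintro x ⟨g, hg, rfl⟩
    exact inS4_mem_A0 (Ggrp_conj hg)
  · rintro x (rfl | rfl)
    · exact subset_closure ⟨1, one_mem _, by group⟩
    · exact subset_closure ⟨A3, A3_mem_Ggrp, C2_def⟩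

lemma Ugrp_eq : Ugrp = A0.topologicalClosure := by
  have h0 : Ugrp
      = (Subgroup.closure {x : OmegaSG | ∃ g ∈ Ggrp, x = g * C * g⁻¹}).topologicalClosure := rfl
  rw [h0, genset_eq]

lemma mem_Ugrp_iff {x : OmegaSG} : x ∈ Ugrp ↔ ∀ n, ∃ v ∈ A0, agree n x v := by
  rw [Ugrp_eq]; exact mem_topClosure_iff

end S14

namespace S14
open Equiv Subgroup

/-! ### parity and the even-part lemma -/

lemma parity_of_parU {s t : ℤ} (h : parU (C ^ s * C2 ^ t) = 1) : (s + t) % 2 = 0 := by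
  rw [map_mul, map_zpow, map_zpow, parU_C, parU_C2] at h
  have h2 : ((-1 : ℤˣ)) ^ (s + t) = 1 := by rw [zpow_add]; exact h
  by_contra hodd
  obtain ⟨r, hr⟩ : ∃ r : ℤ, s + t = 2 * r + 1 := ⟨(s + t) / 2, by omega⟩
  have hsq : ((-1 : ℤˣ)) ^ (2 : ℤ) = 1 := by decide
  have h3 : ((-1 : ℤˣ)) ^ (s + t) = -1 := by
    rw [hr, zpow_add, zpow_one, zpow_mul, hsq, one_zpow, one_mul]
  rw [h3] at h2
  exact absurd h2 (by decide)

lemma EV {s t : ℤ} (hst : (s + t) % 2 = 0) :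
    ∃ β ∈ A0, C ^ s * C2 ^ t = pairOm β β⁻¹ := by
  obtain ⟨e, he⟩ : ∃ e : ℤ, s = t + 2 * e := ⟨(s - t) / 2, by omega⟩
  have h1 : (C * C2) ^ t = pairOm (C2⁻¹ ^ t) (C2 ^ t) := by rw [CC2_pair, pair_zpow]
  have hCsq : C * C = pairOm (C2⁻¹ * C⁻¹) (C2 * C) := by
    have hfact : C * C = (C * C2) * (C * C2⁻¹) := by
      have h' : (C * C2) * (C * C2⁻¹) = C * (C2 * C) * C2⁻¹ := by group
      rw [h', ← comm_CC2]
      group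
    rw [hfact, CC2_pair, CC2i_pair, pair_mul]
  have h2 : (C * C) ^ e = pairOm ((C2⁻¹ * C⁻¹) ^ e) ((C2 * C) ^ e) := by rw [hCsq, pair_zpow]
  have key : C ^ s * C2 ^ t = (C * C2) ^ t * (C * C) ^ e := by
    subst he
    have hmz : (C * C2) ^ t = C ^ t * C2 ^ t := commCC2.mul_zpow t
    have hc2 : (C * C) ^ e = C ^ (2 * e) := by
      rw [show (C : OmegaSG) * C = C ^ (2 : ℤ) from by
        rw [show (2 : ℤ) = ((2 : ℕ) : ℤ) from rfl, zpow_natCast, pow_two], ← zpow_mul]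
    rw [hmz, hc2]
    have hcomm := (commCC2.zpow_zpow (2 * e) t).eq
    calc C ^ (t + 2 * e) * C2 ^ t = C ^ t * (C ^ (2 * e) * C2 ^ t) := by rw [zpow_add]; group
    _ = C ^ t * (C2 ^ t * C ^ (2 * e)) := by rw [hcomm]
    _ = C ^ t * C2 ^ t * C ^ (2 * e) := by group
  refine ⟨C2⁻¹ ^ t * (C2⁻¹ * C⁻¹) ^ e, mul_mem (zpow_mem (inv_mem C2_mem) t)
    (zpow_mem (mul_mem (inv_mem C2_mem) (inv_mem C_mem)) e), ?_⟩
  rw [key, h1, h2, pair_mul]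
  have hinv1 : ((C2⁻¹ * C⁻¹) ^ e)⁻¹ = (C2 * C) ^ e := by
    calc ((C2⁻¹ * C⁻¹) ^ e)⁻¹ = ((C2⁻¹ * C⁻¹)⁻¹) ^ e := (inv_zpow _ _).symm
    _ = (C * C2) ^ e := by rw [mul_inv_rev, inv_inv, inv_inv]
    _ = (C2 * C) ^ e := by rw [comm_CC2]
  have hβi : (C2⁻¹ ^ t * (C2⁻¹ * C⁻¹) ^ e)⁻¹ = (C2 * C) ^ e * C2 ^ t := by
    rw [mul_inv_rev, hinv1, inv_zpow, inv_inv]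
  rw [hβi]
  congr 1
  exact (((Commute.refl C2).mul_right commCC2.symm).zpow_zpow t e).eq

/-! ### forward direction -/

lemma pair_vvi_mem {v : OmegaSG} (hv : v ∈ A0) :
    pairOm v v⁻¹ ∈ Subgroup.closure {A1, A3} := by
  obtain ⟨s, t, rfl⟩ := A0_nf hv
  have hstep : C⁻¹ ^ s * C2⁻¹ ^ t = (C ^ s * C2 ^ t)⁻¹ := by
    calc C⁻¹ ^ s * C2⁻¹ ^ t = (C ^ s)⁻¹ * (C2 ^ t)⁻¹ := by rw [inv_zpow, inv_zpow]
    _ = (C2 ^ t * C ^ s)⁻¹ := (mul_inv_rev _ _).symm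
    _ = (C ^ s * C2 ^ t)⁻¹ := by rw [← (commCC2.zpow_zpow s t).eq]
  have hpair : pairOm (C ^ s * C2 ^ t) ((C ^ s * C2 ^ t)⁻¹)
      = (pairOm C C⁻¹) ^ s * (pairOm C2 C2⁻¹) ^ t := by
    rw [pair_zpow, pair_zpow, pair_mul]
    congr 1
    exact hstep.symm
  rw [hpair, pairOm_CCi, pairOm_C2C2i]
  exact mul_mem (zpow_mem (mul_mem C2_mem_Gam (inv_mem C_mem_Gam)) s)
    (zpow_mem (mul_mem (inv_mem C2_mem_Gam) (inv_mem C_mem_Gam)) t)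

lemma fwd {x : OmegaSG} (hx : x ∈ Ugrp) : pairOm x x⁻¹ ∈ Ggrp := by
  rw [mem_Ggrp_iff]
  intro n
  obtain ⟨v, hv, ha⟩ := mem_Ugrp_iff.mp hx n
  exact ⟨pairOm v v⁻¹, pair_vvi_mem hv,
    agree_mono (Nat.le_succ n) (agree_pair ha (agree_inv ha))⟩

/-! ### backward direction -/

lemma bwd {x : OmegaSG} (H : pairOm x x⁻¹ ∈ Ggrp) : x ∈ Ugrp := by
  rw [mem_Ugrp_iff]
  have key : ∀ m : ℕ, 4 ≤ m → ∃ v ∈ A0, agree m x v := by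
    intro m hm
    obtain ⟨h, hΓ, hag⟩ := mem_Ggrp_iff.mp H (m + 1)
    obtain ⟨v, hv, k, rfl⟩ := Gam_nf hΓ
    obtain ⟨k', hk'lt, hkeq⟩ : ∃ k' : ℕ, k' < 4 ∧ (A3 : OmegaSG) ^ k = A3 ^ k' :=
      ⟨(k % 4).toNat, emod4_bounds k, A3_zpow_red k⟩
    rw [hkeq] at hag
    -- parity forces v to be "even"
    have hparh : parU (v * A3 ^ k') = 1 := by
      have h1 := parU_pairOm x x⁻¹
      have h2 := parU_agree (agree_mono (by omega) hag)
      rw [h1] at h2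
      exact h2.symm
    have hparv : parU v = 1 := by
      rw [map_mul, map_pow, parU_A3, one_pow, mul_one] at hparh
      exact hparh
    obtain ⟨s, t, rfl⟩ := A0_nf hv
    obtain ⟨β, hβ, hEV⟩ := EV (parity_of_parU hparv)
    have hA3k : (A3 : OmegaSG) ^ k' = pairOm (A2 ^ k') (A3 ^ k') := by
      conv_lhs => rw [A3_pair]
      rw [pair_pow]
    rw [hEV, hA3k, pair_mul] at hag
    have h1 : agree m x (β * A2 ^ k') := agree_pair_fst hag
    have h2 : agree m x⁻¹ (β⁻¹ * A3 ^ k') := agree_pair_snd hag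
    have h2' : agree m x ((β⁻¹ * A3 ^ k')⁻¹) := by
      have h3 := agree_inv h2
      rw [inv_inv] at h3
      exact h3
    have hcmp : agree m (A3 ^ k' * (β * A2 ^ k')) β := by
      have hx1 : agree m (β * A2 ^ k') ((β⁻¹ * A3 ^ k')⁻¹) := agree_trans (agree_symm h1) h2'
      refine agree_trans (agree_mul (agree_refl m (A3 ^ k')) hx1) (agree_of_eq ?_)
      group
    interval_cases k'
    · -- k' = 0
      refine ⟨β, hβ, agree_trans h1 (agree_of_eq ?_)⟩
      rw [pow_zero, mul_one]
    · -- k' = 1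
      exfalso
      have hγ : A3 * β * A3⁻¹ ∈ A0 := conjA3_mem hβ
      have hEq : A3 ^ 1 * (β * A2 ^ 1) = (A3 * β * A3⁻¹) * C2 * (A3 * A3) := by
        rw [pow_one, pow_one]
        calc A3 * (β * A2) = (A3 * β * A3⁻¹) * (A3 * A2) := by group
        _ = (A3 * β * A3⁻¹) * (C2 * (A3 * A3)) := by rw [A3A2_eq]
        _ = (A3 * β * A3⁻¹) * C2 * (A3 * A3) := by group
      have hcmp' : agree m ((A3 * β * A3⁻¹) * C2 * (A3 * A3)) β :=
        agree_trans (agree_of_eq hEq.symm) hcmp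
      have hfin : agree m (A3 * A3) (((A3 * β * A3⁻¹) * C2)⁻¹ * β) := by
        refine agree_trans (agree_of_eq ?_)
          (agree_mul (agree_refl m (((A3 * β * A3⁻¹) * C2)⁻¹)) hcmp')
        group
      obtain ⟨s', t', hst'⟩ := A0_nf (mul_mem (inv_mem (mul_mem hγ C2_mem)) hβ)
      exact noA32 s' t'
        (agree_mono (by omega) (agree_trans hfin (agree_of_eq hst')))
    · -- k' = 2
      exfalso
      have hEq : A3 ^ 2 * (β * A2 ^ 2) = β⁻¹ * (C2⁻¹ * C⁻¹) := by
        rw [pow_two, pow_two]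
        have e : A3 * A3 * (β * (A2 * A2))
            = (A3 * A3) * β * (A3 * A3)⁻¹ * ((A3 * A3) * (A2 * A2)) := by
          group
        rw [e, conjA32_inv hβ, A32A22]
      have hcmp2 : agree m (β⁻¹ * (C2⁻¹ * C⁻¹)) β := agree_trans (agree_of_eq hEq.symm) hcmp
      have hone : C2 * C * β * (β⁻¹ * (C2⁻¹ * C⁻¹)) = 1 := by
        rw [← comm_CC2]; group
      have hfin : agree m 1 (C2 * C * (β * β)) := by
        have step := agree_mul (agree_refl m (C2 * C * β)) hcmp2
        exact agree_trans (agree_of_eq hone.symm) (agree_trans step (agree_of_eq (by group)))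
      obtain ⟨p, q, rfl⟩ := A0_nf hβ
      have h0 : (C2 : OmegaSG) * C = C ^ (1 : ℤ) * C2 ^ (1 : ℤ) := by
        rw [zpow_one, zpow_one, comm_CC2]
      have hcollect : C2 * C * (C ^ p * C2 ^ q * (C ^ p * C2 ^ q))
          = C ^ (1 + (p + p)) * C2 ^ (1 + (q + q)) := by
        rw [h0, A0_mul_nf, A0_mul_nf]
      rw [hcollect] at hfin
      exact noOdd (1 + (p + p)) (1 + (q + q)) (by omega) (by omega)
        (agree_mono (by omega) (agree_symm hfin))
    · -- k' = 3
      exfalso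
      have hγ : A3 ^ (3 : ℕ) * β * (A3 ^ (3 : ℕ))⁻¹ ∈ A0 := conjA3_pow_mem 3 hβ
      have hEq : A3 ^ 3 * (β * A2 ^ 3)
          = (A3 ^ (3 : ℕ) * β * (A3 ^ (3 : ℕ))⁻¹) * C * (A3 * A3) := by
        have h3 : (A3 : OmegaSG) ^ (3 : ℕ) = A3 * A3 * A3 := by
          rw [pow_succ, pow_two]
        have h3' : (A2 : OmegaSG) ^ (3 : ℕ) = A2 * A2 * A2 := by
          rw [pow_succ, pow_two]
        calc A3 ^ 3 * (β * A2 ^ 3)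
            = (A3 ^ (3 : ℕ) * β * (A3 ^ (3 : ℕ))⁻¹) * (A3 ^ (3 : ℕ) * A2 ^ (3 : ℕ)) := by group
        _ = (A3 ^ (3 : ℕ) * β * (A3 ^ (3 : ℕ))⁻¹) * (A3 * A3 * A3 * (A2 * A2 * A2)) := by
              rw [h3, h3']
        _ = (A3 ^ (3 : ℕ) * β * (A3 ^ (3 : ℕ))⁻¹) * (C * (A3 * A3)) := by rw [A33A23]
        _ = (A3 ^ (3 : ℕ) * β * (A3 ^ (3 : ℕ))⁻¹) * C * (A3 * A3) := by group
      have hcmp' : agree m ((A3 ^ (3 : ℕ) * β * (A3 ^ (3 : ℕ))⁻¹) * C * (A3 * A3)) β :=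
        agree_trans (agree_of_eq hEq.symm) hcmp
      have hfin : agree m (A3 * A3)
          (((A3 ^ (3 : ℕ) * β * (A3 ^ (3 : ℕ))⁻¹) * C)⁻¹ * β) := by
        refine agree_trans (agree_of_eq ?_)
          (agree_mul (agree_refl m (((A3 ^ (3 : ℕ) * β * (A3 ^ (3 : ℕ))⁻¹) * C)⁻¹)) hcmp')
        group
      obtain ⟨s', t', hst'⟩ := A0_nf (mul_mem (inv_mem (mul_mem hγ C_mem)) hβ)
      exact noA32 s' t'
        (agree_mono (by omega) (agree_trans hfin (agree_of_eq hst')))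
  intro n
  rcases le_total n 4 with hn | hn
  · obtain ⟨v, hv, hav⟩ := key 4 le_rfl
    exact ⟨v, hv, agree_mono hn hav⟩
  · exact key n hn

end S14


/-- `x ∈ U` iff `(x, x⁻¹) ∈ G`. -/
theorem stmt14 : ∀ x : OmegaSG, x ∈ Ugrp ↔ pairOm x x⁻¹ ∈ Ggrp :=
  fun _ => ⟨S14.fwd, S14.bwd⟩
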